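/- arXiv:2206.02293 — 2 statements merged into one kernel-verified Lean document; each statement's English description precedes it below -/
import Mathlib

section
/- Let m ∈ (1/2)ℕ_odd and p ∈ ℤ with 0 ≤ p ≤ 2m; let τ lie in the upper half-plane and let z ∈ ℂ be generic. Then: (1)(i) Ξ^{(1)[m,p]}(τ+1, z) = e^{πi(2p+1)²/(4(2m+1)) − πi/4} Ξ^{(2)[m,p]}(τ, z); (ii) Ξ^{(2)[m,p]}(τ+1, z) = −e^{πi(2p+1)²/(4(2m+1)) − πi/4} Ξ^{(1)[m,p]}(τ, z); (iii) Ξ^{(3)[m,p]}(τ+1, z) = e^{πip²/(2m+1)} Ξ^{(3)[m,p]}(τ, z); (2) the same three identities hold with Ξ^{(i)[m,p]} replaced by Υ^{(i)[m,p]} throughout. -/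
noncomputable section

open scoped BigOperators

namespace Mock

/-- `e x = exp(2πix)` -/
def e (x : ℂ) : ℂ := Complex.exp (2 * (Real.pi : ℂ) * Complex.I * x)

/-- `qpow τ a = q^a = exp(2πiaτ)` for a real exponent `a` -/
def qpow (τ : ℂ) (a : ℝ) : ℂ := Complex.exp (2 * (Real.pi : ℂ) * Complex.I * (a : ℂ) * τ)

/-- Jacobi theta function `θ^{(ε)}_{k,m}(τ,z)` -/
def theta (ε : ℂ) (k m : ℝ) (τ z : ℂ) : ℂ :=
  ∑' j : ℤ, ε ^ j * e ((m : ℂ) * ((j : ℂ) + (k : ℂ) / (2 * (m : ℂ))) * z)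
      * qpow τ (m * ((j : ℝ) + k / (2 * m)) ^ 2)

/-- `Φ^{(ε)[m,s]}_1` -/
def Phi1 (ε : ℂ) (m s : ℝ) (τ z₁ z₂ t : ℂ) : ℂ :=
  e (-(m : ℂ) * t) * ∑' j : ℤ,
    ε ^ j * e ((m : ℂ) * (j : ℂ) * (z₁ + z₂) + (s : ℂ) * z₁)
      * qpow τ (m * (j : ℝ) ^ 2 + s * (j : ℝ)) / (1 - e z₁ * qpow τ (j : ℝ))

/-- `Φ^{(ε)[m,s]}_2` -/
def Phi2 (ε : ℂ) (m s : ℝ) (τ z₁ z₂ t : ℂ) : ℂ :=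
  e (-(m : ℂ) * t) * ∑' j : ℤ,
    ε ^ j * e (-(m : ℂ) * (j : ℂ) * (z₁ + z₂) - (s : ℂ) * z₂)
      * qpow τ (m * (j : ℝ) ^ 2 + s * (j : ℝ)) / (1 - e (-z₂) * qpow τ (j : ℝ))

/-- `Φ^{(ε)[m,s]} = Φ₁ - Φ₂` -/
def Phi (ε : ℂ) (m s : ℝ) (τ z₁ z₂ t : ℂ) : ℂ :=
  Phi1 ε m s τ z₁ z₂ t - Phi2 ε m s τ z₁ z₂ t

/-- `E(x) = 2∫₀ˣ e^{−πt²} dt` -/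
def Efun (x : ℝ) : ℝ := 2 * ∫ t in (0:ℝ)..x, Real.exp (-Real.pi * t ^ 2)

/-- `P^{(ε)}_{j,m}(τ,w)` -/
def Pfun (ε : ℂ) (j m : ℝ) (τ w : ℂ) : ℂ :=
  ∑' k : ℤ, ε ^ k *
    (Efun ((j + 2 * m * (k : ℝ) - 2 * m * (w.im / τ.im)) * Real.sqrt (τ.im / m)) : ℂ) *
    Complex.exp (-(Real.pi : ℂ) * Complex.I * τ * ((j : ℂ) + 2 * (m : ℂ) * (k : ℂ)) ^ 2 / (2 * (m : ℂ))
      + 2 * (Real.pi : ℂ) * Complex.I * ((j : ℂ) + 2 * (m : ℂ) * (k : ℂ)) * w)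

/-- `Q^{(ε)}_{j,m}(τ,w)` -/
def Qfun (ε : ℂ) (j m : ℝ) (τ w : ℂ) : ℂ :=
  ∑' k : ℤ, ε ^ k * (if 0 ≤ k then (1 : ℂ) else -1) *
    Complex.exp (-(Real.pi : ℂ) * Complex.I * τ * ((j : ℂ) + 2 * (m : ℂ) * (k : ℂ)) ^ 2 / (2 * (m : ℂ))
      + 2 * (Real.pi : ℂ) * Complex.I * ((j : ℂ) + 2 * (m : ℂ) * (k : ℂ)) * w)

/-- `R^{(ε)}_{j,m}(τ,w)`, the sum over `n = j + 2mk`, `k ∈ ℤ` -/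
def Rfun (ε : ℂ) (j m : ℝ) (τ w : ℂ) : ℂ :=
  ∑' k : ℤ, ε ^ k *
    ((Real.sign (2 * m * (k : ℝ) + 2 * m - 1 / 2) : ℂ)
      - (Efun ((j + 2 * m * (k : ℝ) - 2 * m * (w.im / τ.im)) * Real.sqrt (τ.im / m)) : ℂ)) *
    Complex.exp (-(Real.pi : ℂ) * Complex.I * τ * ((j : ℂ) + 2 * (m : ℂ) * (k : ℂ)) ^ 2 / (2 * (m : ℂ))
      + 2 * (Real.pi : ℂ) * Complex.I * ((j : ℂ) + 2 * (m : ℂ) * (k : ℂ)) * w)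

/-- correction term `Φ^{(ε)[m,s]}_{add}`; the finite sum over `k ∈ s+ℤ`, `s ≤ k < s+2m`
is parametrized by `k = s + n`, `0 ≤ n < 2m`. -/
def PhiAdd (ε : ℂ) (m s : ℝ) (τ z₁ z₂ t : ℂ) : ℂ :=
  -(1/2) * e (-(m : ℂ) * t) *
    ∑' n : ℤ, if 0 ≤ n ∧ (n : ℝ) < 2 * m then
      Rfun ε (s + (n : ℝ)) m τ ((z₁ - z₂) / 2) *
        (theta ε (s + (n : ℝ)) m τ (z₁ + z₂) - theta ε (-(s + (n : ℝ))) m τ (z₁ + z₂))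
    else 0

/-- Zwegers modification `Φ̃^{(ε)[m,s]}` -/
def PhiTilde (ε : ℂ) (m s : ℝ) (τ z₁ z₂ t : ℂ) : ℂ :=
  Phi ε m s τ z₁ z₂ t + PhiAdd ε m s τ z₁ z₂ t

/-- Dedekind eta function -/
def eta (τ : ℂ) : ℂ := qpow τ (1/24) * ∏' n : ℕ, (1 - qpow τ ((n : ℝ) + 1))

/-- Mumford theta `ϑ₁₁(τ,z) = i θ^{(−)}_{1/2,1/2}(τ,2z)` -/
def vtheta11 (τ z : ℂ) : ℂ := Complex.I * theta (-1) (1/2) (1/2) τ (2 * z)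

/-- Mumford theta `ϑ₁₀(τ,z) = θ^{(+)}_{1/2,1/2}(τ,2z)` -/
def vtheta10 (τ z : ℂ) : ℂ := theta 1 (1/2) (1/2) τ (2 * z)

/-- the half-odd integer `(2n+1)/2` -/
def hodd (n : ℕ) : ℝ := (2 * (n : ℝ) + 1) / 2

def psi1 (m : ℝ) (τ z : ℂ) : ℂ :=
  PhiTilde (-1) m (1/2) τ (z/2 + τ/2 - 1/2) (z/2 - τ/2 + 1/2) 0
def psi2 (m : ℝ) (τ z : ℂ) : ℂ :=
  PhiTilde (-1) m (1/2) τ (z/2 + τ/2) (z/2 - τ/2) 0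
def psi3 (m : ℝ) (τ z : ℂ) : ℂ :=
  PhiTilde (-1) m (1/2) τ (z/2 - 1/2) (z/2 + 1/2) 0

def Xi1 (m : ℝ) (p : ℤ) (τ z : ℂ) : ℂ :=
  qpow τ (-m/4) * theta (-1) ((2 * (p : ℝ) + 1) * m) (m + 1/2) τ 0 * psi1 m τ z
def Xi2 (m : ℝ) (p : ℤ) (τ z : ℂ) : ℂ :=
  qpow τ (-m/4) * theta 1 ((2 * (p : ℝ) + 1) * m) (m + 1/2) τ 0 * psi2 m τ z
def Xi3 (m : ℝ) (p : ℤ) (τ z : ℂ) : ℂ :=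
  theta (-1) (2 * (p : ℝ) * m) (m + 1/2) τ 0 * psi3 m τ z

def Ups1 (m : ℝ) (p : ℤ) (τ z : ℂ) : ℂ :=
  -Complex.I * eta τ ^ 3 *
    (theta (-1) ((p : ℝ) + 1/2) (m + 1/2) τ z - theta (-1) (-((p : ℝ) + 1/2)) (m + 1/2) τ z) /
    theta 1 0 (1/2) τ z
def Ups2 (m : ℝ) (p : ℤ) (τ z : ℂ) : ℂ :=
  eta τ ^ 3 *
    (theta 1 ((p : ℝ) + 1/2) (m + 1/2) τ z - theta 1 (-((p : ℝ) + 1/2)) (m + 1/2) τ z) /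
    theta (-1) 0 (1/2) τ z
def Ups3 (m : ℝ) (p : ℤ) (τ z : ℂ) : ℂ :=
  -Complex.I * eta τ ^ 3 *
    (theta (-1) (p : ℝ) (m + 1/2) τ z - theta (-1) (-(p : ℝ)) (m + 1/2) τ z) /
    theta 1 (1/2) (1/2) τ z

def G1 (m : ℝ) (p : ℤ) (τ z : ℂ) : ℂ := Xi1 m p τ z - Ups1 m p τ z
def G2 (m : ℝ) (p : ℤ) (τ z : ℂ) : ℂ := Xi2 m p τ z - Ups2 m p τ z
def G3 (m : ℝ) (p : ℤ) (τ z : ℂ) : ℂ := Xi3 m p τ z - Ups3 m p τ z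

/-- `ω^{[m]}_{j,k}(z₁,z₂,z₃)` -/
def omega (m : ℝ) (j k : ℕ) (z₁ z₂ z₃ : ℂ) : ℂ :=
  e ((j : ℂ) * (z₁ - z₂)) * e ((2 * (m : ℂ) * (j : ℂ) - (k : ℂ)) * (z₁ - 2 * z₂ - z₃) / 2)
  + e (-(j : ℂ) * (z₁ - z₂)) * e (-(2 * (m : ℂ) * (j : ℂ) - (k : ℂ)) * (z₁ - 2 * z₂ - z₃) / 2)
  - e ((j : ℂ) * (z₁ - z₂)) * e ((2 * (m : ℂ) * (j : ℂ) - (k : ℂ)) * (z₁ + z₃) / 2)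
  - e (-(j : ℂ) * (z₁ - z₂)) * e (-(2 * (m : ℂ) * (j : ℂ) - (k : ℂ)) * (z₁ + z₃) / 2)

/-- indefinite modular form `g^{(1)[m,p]}_k(τ)` (with the convention of the paper,
split according to `k = m` or `k < m`). -/
def g1 (m : ℝ) (p : ℤ) (k : ℝ) (τ : ℂ) : ℂ :=
  if k = m then
    ((∑' x : ℤ × ℤ, if 0 < x.2 ∧ x.2 ≤ x.1 then
        (-1 : ℂ) ^ x.1 * e ((m : ℂ) / 2) *
          qpow τ ((m + 1/2) * ((x.1 : ℝ) + m * (2 * (p : ℝ) + 1) / (2 * m + 1)) ^ 2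
            - m * ((x.2 : ℝ) + (p : ℝ)) ^ 2) else 0)
      - (∑' x : ℤ × ℤ, if x.1 < x.2 ∧ x.2 ≤ 0 then
        (-1 : ℂ) ^ x.1 * e ((m : ℂ) / 2) *
          qpow τ ((m + 1/2) * ((x.1 : ℝ) + m * (2 * (p : ℝ) + 1) / (2 * m + 1)) ^ 2
            - m * ((x.2 : ℝ) + (p : ℝ)) ^ 2) else 0))
    + (1/2) * e ((m : ℂ) / 2) * theta (-1) ((2 * (p : ℝ) + 1) * m) (m + 1/2) τ 0 *
        ∑ r ∈ Finset.Icc (-p) p, qpow τ (-m * (r : ℝ) ^ 2)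
  else
    ((∑' x : ℤ × ℤ, if 0 ≤ x.2 ∧ x.2 < x.1 then
        (-1 : ℂ) ^ x.1 * e ((k : ℂ) / 2) *
          qpow τ ((m + 1/2) * ((x.1 : ℝ) + m * (2 * (p : ℝ) + 1) / (2 * m + 1)) ^ 2
            - m * ((x.2 : ℝ) + (p : ℝ) + (m + k) / (2 * m)) ^ 2) else 0)
      - (∑' x : ℤ × ℤ, if x.1 ≤ x.2 ∧ x.2 < 0 then
        (-1 : ℂ) ^ x.1 * e ((k : ℂ) / 2) *
          qpow τ ((m + 1/2) * ((x.1 : ℝ) + m * (2 * (p : ℝ) + 1) / (2 * m + 1)) ^ 2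
            - m * ((x.2 : ℝ) + (p : ℝ) + (m + k) / (2 * m)) ^ 2) else 0))
    + ((∑' x : ℤ × ℤ, if 0 ≤ x.2 ∧ x.2 ≤ x.1 then
        (-1 : ℂ) ^ x.1 * e ((k : ℂ) / 2) *
          qpow τ ((m + 1/2) * ((x.1 : ℝ) + m * (2 * (p : ℝ) + 1) / (2 * m + 1)) ^ 2
            - m * ((x.2 : ℝ) + (p : ℝ) + (m - k) / (2 * m)) ^ 2) else 0)
      - (∑' x : ℤ × ℤ, if x.1 < x.2 ∧ x.2 < 0 then
        (-1 : ℂ) ^ x.1 * e ((k : ℂ) / 2) *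
          qpow τ ((m + 1/2) * ((x.1 : ℝ) + m * (2 * (p : ℝ) + 1) / (2 * m + 1)) ^ 2
            - m * ((x.2 : ℝ) + (p : ℝ) + (m - k) / (2 * m)) ^ 2) else 0))
    + e ((k : ℂ) / 2) * theta (-1) ((2 * (p : ℝ) + 1) * m) (m + 1/2) τ 0 *
        ∑ r ∈ Finset.Icc (-p + 1) p, qpow τ (-m * ((r : ℝ) + (k - m) / (2 * m)) ^ 2)

/-- indefinite modular form `g^{(2)[m,p]}_k(τ)` -/
def g2 (m : ℝ) (p : ℤ) (k : ℝ) (τ : ℂ) : ℂ :=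
  if k = m then
    -(-1 : ℂ) ^ p *
      ((∑' x : ℤ × ℤ, if 0 < x.2 ∧ x.2 ≤ x.1 then
          (-1 : ℂ) ^ x.2 *
            qpow τ ((m + 1/2) * ((x.1 : ℝ) + m * (2 * (p : ℝ) + 1) / (2 * m + 1)) ^ 2
              - m * ((x.2 : ℝ) + (p : ℝ)) ^ 2) else 0)
        - (∑' x : ℤ × ℤ, if x.1 < x.2 ∧ x.2 ≤ 0 then
          (-1 : ℂ) ^ x.2 *
            qpow τ ((m + 1/2) * ((x.1 : ℝ) + m * (2 * (p : ℝ) + 1) / (2 * m + 1)) ^ 2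
              - m * ((x.2 : ℝ) + (p : ℝ)) ^ 2) else 0))
    - (1/2) * theta 1 ((2 * (p : ℝ) + 1) * m) (m + 1/2) τ 0 *
        ∑ r ∈ Finset.Icc (-p) p, (-1 : ℂ) ^ r * qpow τ (-m * (r : ℝ) ^ 2)
  else
    (-1 : ℂ) ^ p *
      ((∑' x : ℤ × ℤ, if 0 ≤ x.2 ∧ x.2 < x.1 then
          (-1 : ℂ) ^ x.2 *
            qpow τ ((m + 1/2) * ((x.1 : ℝ) + m * (2 * (p : ℝ) + 1) / (2 * m + 1)) ^ 2
              - m * ((x.2 : ℝ) + (p : ℝ) + (m + k) / (2 * m)) ^ 2) else 0)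
        - (∑' x : ℤ × ℤ, if x.1 ≤ x.2 ∧ x.2 < 0 then
          (-1 : ℂ) ^ x.2 *
            qpow τ ((m + 1/2) * ((x.1 : ℝ) + m * (2 * (p : ℝ) + 1) / (2 * m + 1)) ^ 2
              - m * ((x.2 : ℝ) + (p : ℝ) + (m + k) / (2 * m)) ^ 2) else 0))
    - (-1 : ℂ) ^ p *
      ((∑' x : ℤ × ℤ, if 0 ≤ x.2 ∧ x.2 ≤ x.1 then
          (-1 : ℂ) ^ x.2 *
            qpow τ ((m + 1/2) * ((x.1 : ℝ) + m * (2 * (p : ℝ) + 1) / (2 * m + 1)) ^ 2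
              - m * ((x.2 : ℝ) + (p : ℝ) + (m - k) / (2 * m)) ^ 2) else 0)
        - (∑' x : ℤ × ℤ, if x.1 < x.2 ∧ x.2 < 0 then
          (-1 : ℂ) ^ x.2 *
            qpow τ ((m + 1/2) * ((x.1 : ℝ) + m * (2 * (p : ℝ) + 1) / (2 * m + 1)) ^ 2
              - m * ((x.2 : ℝ) + (p : ℝ) + (m - k) / (2 * m)) ^ 2) else 0))
    - theta 1 ((2 * (p : ℝ) + 1) * m) (m + 1/2) τ 0 *
        ∑ r ∈ Finset.Icc (-p + 1) p, (-1 : ℂ) ^ r *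
          qpow τ (-m * ((r : ℝ) + (k - m) / (2 * m)) ^ 2)

/-- indefinite modular form `g^{(3)[m,p]}_k(τ)` -/
def g3 (m : ℝ) (p : ℤ) (k : ℝ) (τ : ℂ) : ℂ :=
  if k = m then
    e ((m : ℂ) / 2) *
      ((∑' x : ℤ × ℤ, if 0 < x.2 ∧ x.2 ≤ x.1 then
          (-1 : ℂ) ^ x.1 *
            qpow τ ((m + 1/2) * ((x.1 : ℝ) + 2 * m * (p : ℝ) / (2 * m + 1)) ^ 2
              - m * ((x.2 : ℝ) - 1/2 + (p : ℝ)) ^ 2) else 0)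
        - (∑' x : ℤ × ℤ, if x.1 < x.2 ∧ x.2 ≤ 0 then
          (-1 : ℂ) ^ x.1 *
            qpow τ ((m + 1/2) * ((x.1 : ℝ) + 2 * m * (p : ℝ) / (2 * m + 1)) ^ 2
              - m * ((x.2 : ℝ) - 1/2 + (p : ℝ)) ^ 2) else 0))
    + e ((m : ℂ) / 2) * theta (-1) (2 * (p : ℝ) * m) (m + 1/2) τ 0 *
        ∑ r ∈ Finset.Icc 1 p, qpow τ (-m * (2 * (r : ℝ) - 1) ^ 2 / 4)
  else
    ((∑' x : ℤ × ℤ, if 0 ≤ x.2 ∧ x.2 < x.1 then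
        (-1 : ℂ) ^ x.1 * e ((k : ℂ) / 2) *
          qpow τ ((m + 1/2) * ((x.1 : ℝ) + 2 * m * (p : ℝ) / (2 * m + 1)) ^ 2
            - m * ((x.2 : ℝ) + (p : ℝ) + k / (2 * m)) ^ 2) else 0)
      - (∑' x : ℤ × ℤ, if x.1 ≤ x.2 ∧ x.2 < 0 then
        (-1 : ℂ) ^ x.1 * e ((k : ℂ) / 2) *
          qpow τ ((m + 1/2) * ((x.1 : ℝ) + 2 * m * (p : ℝ) / (2 * m + 1)) ^ 2
            - m * ((x.2 : ℝ) + (p : ℝ) + k / (2 * m)) ^ 2) else 0))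
    + ((∑' x : ℤ × ℤ, if 0 ≤ x.2 ∧ x.2 ≤ x.1 then
        (-1 : ℂ) ^ x.1 * e ((k : ℂ) / 2) *
          qpow τ ((m + 1/2) * ((x.1 : ℝ) + 2 * m * (p : ℝ) / (2 * m + 1)) ^ 2
            - m * ((x.2 : ℝ) + (p : ℝ) - k / (2 * m)) ^ 2) else 0)
      - (∑' x : ℤ × ℤ, if x.1 < x.2 ∧ x.2 < 0 then
        (-1 : ℂ) ^ x.1 * e ((k : ℂ) / 2) *
          qpow τ ((m + 1/2) * ((x.1 : ℝ) + 2 * m * (p : ℝ) / (2 * m + 1)) ^ 2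
            - m * ((x.2 : ℝ) + (p : ℝ) - k / (2 * m)) ^ 2) else 0))
    + e ((k : ℂ) / 2) * theta (-1) (2 * (p : ℝ) * m) (m + 1/2) τ 0 *
        ∑ r ∈ Finset.Icc (-p + 1) (p - 1), qpow τ (-(2 * m * (r : ℝ) + k) ^ 2 / (4 * m))



/-! ### Helper lemmas -/

lemma e_add (x y : ℂ) : e (x + y) = e x * e y := by
  simp [e, mul_add, Complex.exp_add]
lemma e_int (n : ℤ) : e (n : ℂ) = 1 := by
  rw [e, show 2*(Real.pi:ℂ)*Complex.I*(n:ℂ) = (n:ℤ)*(2*Real.pi*Complex.I) by ring]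
  exact Complex.exp_int_mul_two_pi_mul_I n
lemma e_zero : e 0 = 1 := by simpa using e_int 0
lemma e_one : e 1 = 1 := by simpa using e_int 1
lemma e_half (n : ℤ) : e ((n : ℂ)/2) = (-1 : ℂ) ^ n := by
  rw [e, show 2*(Real.pi:ℂ)*Complex.I*((n:ℂ)/2) = (n:ℤ)*(Real.pi*Complex.I) by ring,
    Complex.exp_int_mul, Complex.exp_pi_mul_I]
lemma e_half_one : e (1/2) = -1 := by simpa using e_half 1
lemma e_eq_of_sub_int (x y : ℂ) (d : ℤ) (h : x = y + d) : e x = e y := by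
  rw [h, e_add, e_int, mul_one]
lemma neg_one_zpow_eq (c j : ℤ) (h : Even (c - j)) : ((-1:ℂ))^c = (-1)^j := by
  have h1 : (-1:ℂ)^c = (-1)^j * (-1)^(c-j) := by
    rw [← zpow_add₀ (by norm_num : (-1:ℂ) ≠ 0)]; ring_nf
  rw [h1, h.neg_one_zpow, mul_one]
lemma e_split (A C : ℝ) (c : ℤ) (h : A = C + (c:ℝ)/2) :
    e ((A : ℝ) : ℂ) = e ((C : ℝ) : ℂ) * (-1:ℂ)^c := by
  rw [h, show (((C + (c:ℝ)/2 : ℝ)) : ℂ) = (C:ℂ) + (c:ℂ)/2 by push_cast; ring,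
    e_add, e_half]
lemma qpow_T (τ : ℂ) (a : ℝ) : qpow (τ+1) a = qpow τ a * e (a : ℂ) := by
  rw [qpow, qpow, e, ← Complex.exp_add]; congr 1; ring
lemma qpow_T_int (τ : ℂ) (j : ℤ) : qpow (τ+1) (j : ℝ) = qpow τ (j : ℝ) := by
  rw [qpow_T, show (((j:ℝ)):ℂ) = ((j:ℤ):ℂ) by push_cast; ring, e_int, mul_one]
lemma theta_T (ε σ : ℂ) (k M : ℝ) (C : ℝ) (τ z : ℂ)
    (h : ∀ j : ℤ, e ((M * ((j:ℝ) + k/(2*M))^2 : ℝ) : ℂ) = e ((C:ℝ):ℂ) * σ^j) :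
    theta ε k M (τ+1) z = e ((C:ℝ):ℂ) * theta (ε*σ) k M τ z := by
  unfold theta
  rw [← tsum_mul_left]
  refine tsum_congr fun j => ?_
  rw [qpow_T, h j, mul_zpow]
  ring

section Instances

variable {N : ℕ} {u : ℤ} {m : ℝ} {p : ℤ}

lemma hinst1 (hu : (N:ℤ) = 2*u+1) (hm : m = (N:ℝ)/2) (j : ℤ) :
    e (((m+1/2) * ((j:ℝ) + ((2*(p:ℝ)+1)*m)/(2*(m+1/2)))^2 : ℝ) : ℂ)
      = e ((((2*(p:ℝ)+1)^2*m^2/(2*(2*m+1)) : ℝ)):ℂ) * (-1:ℂ)^j := by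
  have hN1 : ((N:ℝ)+1) ≠ 0 := by positivity
  rw [e_split ((m+1/2) * ((j:ℝ) + ((2*(p:ℝ)+1)*m)/(2*(m+1/2)))^2)
    ((2*(p:ℝ)+1)^2*m^2/(2*(2*m+1))) ((N+1)*j^2 + (2*p+1)*N*j)
    (by rw [hm]; push_cast; field_simp; ring)]
  rw [neg_one_zpow_eq _ j ⟨(u+1)*j^2 + (2*p*u+p+u)*j, by rw [hu]; ring⟩]

lemma e_split_even (A C : ℝ) (c : ℤ) (h : A = C + (c:ℝ)/2) (hc : Even c) :
    e ((A : ℝ) : ℂ) = e ((C : ℝ) : ℂ) := by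
  rw [e_split A C c h, hc.neg_one_zpow, mul_one]

lemma hinst3 (hu : (N:ℤ) = 2*u+1) (hm : m = (N:ℝ)/2) (j : ℤ) :
    e (((m+1/2) * ((j:ℝ) + (2*(p:ℝ)*m)/(2*(m+1/2)))^2 : ℝ) : ℂ)
      = e (((2*(p:ℝ)^2*m^2/(2*m+1) : ℝ)):ℂ) * (1:ℂ)^j := by
  have hN1 : ((N:ℝ)+1) ≠ 0 := by positivity
  rw [one_zpow, mul_one, e_split_even ((m+1/2) * ((j:ℝ) + (2*(p:ℝ)*m)/(2*(m+1/2)))^2) (2*(p:ℝ)^2*m^2/(2*m+1)) ((N+1)*j^2 + 2*p*N*j)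
    (by rw [hm]; push_cast; field_simp; ring) ⟨(u+1)*j^2 + p*N*j, by rw [hu]; ring⟩]

lemma hinstAdd (hu : (N:ℤ) = 2*u+1) (hm : m = (N:ℝ)/2) (n : ℤ) (j : ℤ) :
    e ((m * ((j:ℝ) + (1/2 + (n:ℝ))/(2*m))^2 : ℝ) : ℂ)
      = e ((((1/2 + (n:ℝ))^2/(4*m) : ℝ)):ℂ) * (1:ℂ)^j := by
  have hN0 : 0 < N := by omega
  have hN1 : ((N:ℝ)) ≠ 0 := Nat.cast_ne_zero.mpr hN0.ne'
  obtain ⟨v, hv⟩ := Int.even_mul_succ_self j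
  rw [one_zpow, mul_one, e_split_even (m * ((j:ℝ) + (1/2 + (n:ℝ))/(2*m))^2) ((1/2 + (n:ℝ))^2/(4*m)) (N*j^2 + (2*n+1)*j)
    (by rw [hm]; push_cast; field_simp; ring)
    ⟨u*j^2 + n*j + v, by rw [hu]; linear_combination hv⟩]

lemma hinstAddNeg (hu : (N:ℤ) = 2*u+1) (hm : m = (N:ℝ)/2) (n : ℤ) (j : ℤ) :
    e ((m * ((j:ℝ) + (-(1/2 + (n:ℝ)))/(2*m))^2 : ℝ) : ℂ)
      = e ((((1/2 + (n:ℝ))^2/(4*m) : ℝ)):ℂ) * (1:ℂ)^j := by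
  have hN0 : 0 < N := by omega
  have hN1 : ((N:ℝ)) ≠ 0 := Nat.cast_ne_zero.mpr hN0.ne'
  obtain ⟨v, hv⟩ := Int.even_mul_succ_self (j-1)
  rw [one_zpow, mul_one, e_split_even (m * ((j:ℝ) + (-(1/2 + (n:ℝ)))/(2*m))^2) ((1/2 + (n:ℝ))^2/(4*m)) (N*j^2 - (2*n+1)*j)
    (by rw [hm]; push_cast; field_simp; ring)
    ⟨u*j^2 - n*j + v, by rw [hu]; linear_combination hv⟩]

lemma hinstU1 (hu : (N:ℤ) = 2*u+1) (hm : m = (N:ℝ)/2) (j : ℤ) :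
    e (((m+1/2) * ((j:ℝ) + ((p:ℝ)+1/2)/(2*(m+1/2)))^2 : ℝ) : ℂ)
      = e (((((p:ℝ)+1/2)^2/(2*(2*m+1)) : ℝ)):ℂ) * (-1:ℂ)^j := by
  have hN1 : ((N:ℝ)+1) ≠ 0 := by positivity
  rw [e_split ((m+1/2) * ((j:ℝ) + ((p:ℝ)+1/2)/(2*(m+1/2)))^2)
    (((p:ℝ)+1/2)^2/(2*(2*m+1))) ((N+1)*j^2 + (2*p+1)*j)
    (by rw [hm]; push_cast; field_simp; ring)]
  rw [neg_one_zpow_eq _ j ⟨(u+1)*j^2 + p*j, by rw [hu]; ring⟩]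

lemma hinstU1Neg (hu : (N:ℤ) = 2*u+1) (hm : m = (N:ℝ)/2) (j : ℤ) :
    e (((m+1/2) * ((j:ℝ) + (-((p:ℝ)+1/2))/(2*(m+1/2)))^2 : ℝ) : ℂ)
      = e (((((p:ℝ)+1/2)^2/(2*(2*m+1)) : ℝ)):ℂ) * (-1:ℂ)^j := by
  have hN1 : ((N:ℝ)+1) ≠ 0 := by positivity
  rw [e_split ((m+1/2) * ((j:ℝ) + (-((p:ℝ)+1/2))/(2*(m+1/2)))^2)
    (((p:ℝ)+1/2)^2/(2*(2*m+1))) ((N+1)*j^2 - (2*p+1)*j)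
    (by rw [hm]; push_cast; field_simp; ring)]
  rw [neg_one_zpow_eq _ j ⟨(u+1)*j^2 - p*j - j, by rw [hu]; ring⟩]

lemma hinstU3 (hu : (N:ℤ) = 2*u+1) (hm : m = (N:ℝ)/2) (j : ℤ) :
    e (((m+1/2) * ((j:ℝ) + (p:ℝ)/(2*(m+1/2)))^2 : ℝ) : ℂ)
      = e ((((p:ℝ)^2/(2*(2*m+1)) : ℝ)):ℂ) * (1:ℂ)^j := by
  have hN1 : ((N:ℝ)+1) ≠ 0 := by positivity
  rw [one_zpow, mul_one, e_split_even ((m+1/2) * ((j:ℝ) + (p:ℝ)/(2*(m+1/2)))^2) ((p:ℝ)^2/(2*(2*m+1))) ((N+1)*j^2 + 2*p*j)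
    (by rw [hm]; push_cast; field_simp; ring) ⟨(u+1)*j^2 + p*j, by rw [hu]; ring⟩]

lemma hinstU3Neg (hu : (N:ℤ) = 2*u+1) (hm : m = (N:ℝ)/2) (j : ℤ) :
    e (((m+1/2) * ((j:ℝ) + (-(p:ℝ))/(2*(m+1/2)))^2 : ℝ) : ℂ)
      = e ((((p:ℝ)^2/(2*(2*m+1)) : ℝ)):ℂ) * (1:ℂ)^j := by
  have hN1 : ((N:ℝ)+1) ≠ 0 := by positivity
  rw [one_zpow, mul_one, e_split_even ((m+1/2) * ((j:ℝ) + (-(p:ℝ))/(2*(m+1/2)))^2) ((p:ℝ)^2/(2*(2*m+1))) ((N+1)*j^2 - 2*p*j)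
    (by rw [hm]; push_cast; field_simp; ring) ⟨(u+1)*j^2 - p*j, by rw [hu]; ring⟩]

lemma hinstDen0 (j : ℤ) :
    e (((1/2 : ℝ) * ((j:ℝ) + (0:ℝ)/(2*(1/2)))^2 : ℝ) : ℂ)
      = e (((0:ℝ)):ℂ) * (-1:ℂ)^j := by
  obtain ⟨v, hv⟩ := Int.even_mul_succ_self (j-1)
  rw [e_split ((1/2 : ℝ) * ((j:ℝ) + (0:ℝ)/(2*(1/2)))^2) 0 (j^2) (by push_cast; ring)]
  rw [neg_one_zpow_eq _ j ⟨v, by linear_combination hv⟩]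

lemma hinstDenHalf (j : ℤ) :
    e (((1/2 : ℝ) * ((j:ℝ) + (1/2:ℝ)/(2*(1/2)))^2 : ℝ) : ℂ)
      = e (((1/8:ℝ)):ℂ) * (1:ℂ)^j := by
  obtain ⟨v, hv⟩ := Int.even_mul_succ_self j
  rw [one_zpow, mul_one, e_split_even ((1/2 : ℝ) * ((j:ℝ) + (1/2:ℝ)/(2*(1/2)))^2) (1/8) (j^2+j)
    (by push_cast; ring) ⟨v, by linear_combination hv⟩]

end Instances

lemma exp_shift (X Y c : ℂ) (h : X = Y + 2*(Real.pi:ℂ)*Complex.I*c) :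
    Complex.exp X = e c * Complex.exp Y := by
  rw [h, Complex.exp_add, e]; ring

section Trans

variable {N : ℕ} {u : ℤ} {m : ℝ} {p : ℤ}

lemma Phi1_T (hu : (N:ℤ) = 2*u+1) (hm : m = (N:ℝ)/2) (ε : ℂ) (τ z₁ z₂ t : ℂ) :
    Phi1 ε m (1/2) (τ+1) z₁ z₂ t = Phi1 ε m (1/2) τ z₁ z₂ t := by
  have huc : ((N:ℂ)) = 2*(u:ℂ)+1 := by exact_mod_cast hu
  unfold Phi1
  congr 1
  refine tsum_congr fun j => ?_
  obtain ⟨v, hv⟩ := Int.even_mul_succ_self j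
  have hvc : ((j:ℂ))*((j:ℂ)+1) = (v:ℂ)+(v:ℂ) := by exact_mod_cast hv
  rw [qpow_T_int, qpow_T,
    e_eq_of_sub_int (((m * (j:ℝ)^2 + 1/2 * (j:ℝ) : ℝ)) : ℂ) 0 (u*j^2 + v)
      (by push_cast [hm]; linear_combination ((j:ℂ)^2/2) * huc + (1/2) * hvc),
    e_zero, mul_one]

lemma Phi2_T (hu : (N:ℤ) = 2*u+1) (hm : m = (N:ℝ)/2) (ε : ℂ) (τ z₁ z₂ t : ℂ) :
    Phi2 ε m (1/2) (τ+1) z₁ z₂ t = Phi2 ε m (1/2) τ z₁ z₂ t := by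
  have huc : ((N:ℂ)) = 2*(u:ℂ)+1 := by exact_mod_cast hu
  unfold Phi2
  congr 1
  refine tsum_congr fun j => ?_
  obtain ⟨v, hv⟩ := Int.even_mul_succ_self j
  have hvc : ((j:ℂ))*((j:ℂ)+1) = (v:ℂ)+(v:ℂ) := by exact_mod_cast hv
  rw [qpow_T_int, qpow_T,
    e_eq_of_sub_int (((m * (j:ℝ)^2 + 1/2 * (j:ℝ) : ℝ)) : ℂ) 0 (u*j^2 + v)
      (by push_cast [hm]; linear_combination ((j:ℂ)^2/2) * huc + (1/2) * hvc),
    e_zero, mul_one]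

lemma Rfun_T (hu : (N:ℤ) = 2*u+1) (hm : m = (N:ℝ)/2) (ε : ℂ) (n : ℤ) (τ w : ℂ) :
    Rfun ε (1/2 + (n:ℝ)) m (τ+1) w
      = e (-((((1/2 + (n:ℝ))^2/(4*m) : ℝ)) : ℂ)) * Rfun ε (1/2 + (n:ℝ)) m τ w := by
  have hN0 : 0 < N := by omega
  have hNc : ((N:ℂ)) ≠ 0 := Nat.cast_ne_zero.mpr hN0.ne'
  have hmc : ((m:ℝ):ℂ) = (N:ℂ)/2 := by rw [hm]; push_cast; ring
  unfold Rfun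
  rw [← tsum_mul_left]
  refine tsum_congr fun k => ?_
  obtain ⟨v, hv⟩ := Int.even_mul_succ_self k
  have hvc : ((k:ℂ))*((k:ℂ)+1) = (v:ℂ)+(v:ℂ) := by exact_mod_cast hv
  have huc : ((N:ℂ)) = 2*(u:ℂ)+1 := by exact_mod_cast hu
  have him : (τ + 1).im = τ.im := by simp
  rw [him]
  rw [exp_shift
      (-(Real.pi:ℂ) * Complex.I * (τ+1) * ((((1/2 + (n:ℝ) : ℝ)):ℂ) + 2 * (m:ℂ) * (k:ℂ)) ^ 2 / (2 * (m:ℂ))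
        + 2 * (Real.pi:ℂ) * Complex.I * ((((1/2 + (n:ℝ) : ℝ)):ℂ) + 2 * (m:ℂ) * (k:ℂ)) * w)
      (-(Real.pi:ℂ) * Complex.I * τ * ((((1/2 + (n:ℝ) : ℝ)):ℂ) + 2 * (m:ℂ) * (k:ℂ)) ^ 2 / (2 * (m:ℂ))
        + 2 * (Real.pi:ℂ) * Complex.I * ((((1/2 + (n:ℝ) : ℝ)):ℂ) + 2 * (m:ℂ) * (k:ℂ)) * w)
      (-((((1/2 + (n:ℝ))^2/(4*m) : ℝ)) : ℂ) + ((-((2*n+1)*k + N*k^2) : ℤ):ℂ)/2)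
      (by
          have h2m : (2*((m:ℝ):ℂ)) ≠ 0 := by
            rw [hmc, show (2*((N:ℂ)/2)) = (N:ℂ) by ring]; exact hNc
          have h1 : ((1/2 + (n:ℂ)) + 2*((m:ℝ):ℂ)*(k:ℂ))^2 / (2*((m:ℝ):ℂ))
              = (1/2+(n:ℂ))^2/(2*((m:ℝ):ℂ)) + ((2*(n:ℂ)+1)*(k:ℂ) + (N:ℂ)*(k:ℂ)^2) := by
            rw [show ((1/2 + (n:ℂ)) + 2*((m:ℝ):ℂ)*(k:ℂ))^2
                = (1/2+(n:ℂ))^2 + ((2*(n:ℂ)+1)*(k:ℂ) + (N:ℂ)*(k:ℂ)^2) * (2*((m:ℝ):ℂ)) from by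
                  rw [hmc]; ring,
              add_div, mul_div_cancel_right₀ _ h2m]
          push_cast
          linear_combination (-(Real.pi:ℂ) * Complex.I) * h1)]
  rw [e_add, e_half]
  rw [(show Even (-((2*n+1)*k + N*k^2)) from
    ⟨-(n*k + u*k^2 + v), by rw [hu]; linear_combination -hv⟩).neg_one_zpow]
  ring

lemma Rfun_S (hu : (N:ℤ) = 2*u+1) (hm : m = (N:ℝ)/2) (ε : ℂ) (n : ℤ) (τ w : ℂ) :
    Rfun ε (1/2 + (n:ℝ)) m τ (w+1) = -Rfun ε (1/2 + (n:ℝ)) m τ w := by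
  have hmc : ((m:ℝ):ℂ) = (N:ℂ)/2 := by rw [hm]; push_cast; ring
  unfold Rfun
  rw [← tsum_neg]
  refine tsum_congr fun k => ?_
  have him : (w + 1).im = w.im := by simp
  rw [him]
  rw [exp_shift
      (-(Real.pi:ℂ) * Complex.I * τ * ((((1/2 + (n:ℝ) : ℝ)):ℂ) + 2 * (m:ℂ) * (k:ℂ)) ^ 2 / (2 * (m:ℂ))
        + 2 * (Real.pi:ℂ) * Complex.I * ((((1/2 + (n:ℝ) : ℝ)):ℂ) + 2 * (m:ℂ) * (k:ℂ)) * (w+1))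
      (-(Real.pi:ℂ) * Complex.I * τ * ((((1/2 + (n:ℝ) : ℝ)):ℂ) + 2 * (m:ℂ) * (k:ℂ)) ^ 2 / (2 * (m:ℂ))
        + 2 * (Real.pi:ℂ) * Complex.I * ((((1/2 + (n:ℝ) : ℝ)):ℂ) + 2 * (m:ℂ) * (k:ℂ)) * w)
      (((n + N*k : ℤ):ℂ) + 1/2)
      (by push_cast [hmc]; ring)]
  rw [e_add, e_int, e_half_one, one_mul]
  ring

lemma thetaAdd_T (hu : (N:ℤ) = 2*u+1) (hm : m = (N:ℝ)/2) (n : ℤ) (τ ζ : ℂ) :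
    theta (-1) (1/2 + (n:ℝ)) m (τ+1) ζ
      = e ((((1/2 + (n:ℝ))^2/(4*m) : ℝ)) : ℂ) * theta (-1) (1/2 + (n:ℝ)) m τ ζ := by
  simpa using theta_T (-1) 1 (1/2 + (n:ℝ)) m ((1/2 + (n:ℝ))^2/(4*m)) τ ζ (hinstAdd hu hm n)

lemma thetaAddNeg_T (hu : (N:ℤ) = 2*u+1) (hm : m = (N:ℝ)/2) (n : ℤ) (τ ζ : ℂ) :
    theta (-1) (-(1/2 + (n:ℝ))) m (τ+1) ζ
      = e ((((1/2 + (n:ℝ))^2/(4*m) : ℝ)) : ℂ) * theta (-1) (-(1/2 + (n:ℝ))) m τ ζ := by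
  simpa using theta_T (-1) 1 (-(1/2 + (n:ℝ))) m ((1/2 + (n:ℝ))^2/(4*m)) τ ζ (hinstAddNeg hu hm n)

lemma PhiAdd_T (hu : (N:ℤ) = 2*u+1) (hm : m = (N:ℝ)/2) (τ z₁ z₂ t : ℂ) :
    PhiAdd (-1) m (1/2) (τ+1) z₁ z₂ t = PhiAdd (-1) m (1/2) τ z₁ z₂ t := by
  unfold PhiAdd
  congr 1
  refine tsum_congr fun n => ?_
  by_cases h : 0 ≤ n ∧ (n:ℝ) < 2*m
  · rw [if_pos h, if_pos h, Rfun_T hu hm, thetaAdd_T hu hm, thetaAddNeg_T hu hm]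
    have h1 : e (-((((1/2 + (n:ℝ))^2/(4*m) : ℝ)) : ℂ)) * e ((((1/2 + (n:ℝ))^2/(4*m) : ℝ)) : ℂ) = 1 := by
      rw [← e_add, neg_add_cancel, e_zero]
    linear_combination (Rfun (-1) (1/2 + (n:ℝ)) m τ ((z₁ - z₂)/2) *
      (theta (-1) (1/2 + (n:ℝ)) m τ (z₁ + z₂) - theta (-1) (-(1/2 + (n:ℝ))) m τ (z₁ + z₂))) * h1
  · rw [if_neg h, if_neg h]

lemma PhiTilde_T (hu : (N:ℤ) = 2*u+1) (hm : m = (N:ℝ)/2) (τ z₁ z₂ t : ℂ) :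
    PhiTilde (-1) m (1/2) (τ+1) z₁ z₂ t = PhiTilde (-1) m (1/2) τ z₁ z₂ t := by
  unfold PhiTilde Phi
  rw [Phi1_T hu hm, Phi2_T hu hm, PhiAdd_T hu hm]

lemma Phi1_S (ε : ℂ) (m : ℝ) (τ z₁ z₂ t : ℂ) :
    Phi1 ε m (1/2) τ (z₁+1) (z₂-1) t = -Phi1 ε m (1/2) τ z₁ z₂ t := by
  unfold Phi1
  rw [← mul_neg, ← tsum_neg]
  congr 1
  refine tsum_congr fun j => ?_
  rw [show (m:ℂ)*(j:ℂ)*((z₁+1)+(z₂-1)) + (((1/2:ℝ)):ℂ)*(z₁+1)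
      = ((m:ℂ)*(j:ℂ)*(z₁+z₂) + (((1/2:ℝ)):ℂ)*z₁) + (((1/2:ℝ)):ℂ) by push_cast; ring]
  rw [show (((1/2:ℝ)):ℂ) = (1/2 : ℂ) by norm_num] -- may be redundant
  rw [e_add, e_half_one, e_add z₁ 1, e_one, mul_one]
  ring

lemma Phi2_S (ε : ℂ) (m : ℝ) (τ z₁ z₂ t : ℂ) :
    Phi2 ε m (1/2) τ (z₁+1) (z₂-1) t = -Phi2 ε m (1/2) τ z₁ z₂ t := by
  unfold Phi2
  rw [← mul_neg, ← tsum_neg]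
  congr 1
  refine tsum_congr fun j => ?_
  rw [show -(m:ℂ)*(j:ℂ)*((z₁+1)+(z₂-1)) - (((1/2:ℝ)):ℂ)*(z₂-1)
      = (-(m:ℂ)*(j:ℂ)*(z₁+z₂) - (((1/2:ℝ)):ℂ)*z₂) + (((1/2:ℝ)):ℂ) by push_cast; ring]
  rw [show (((1/2:ℝ)):ℂ) = (1/2 : ℂ) by norm_num]
  rw [e_add, e_half_one, show -(z₂-1) = -z₂ + 1 by ring, e_add (-z₂) 1, e_one, mul_one]
  ring

lemma PhiAdd_S (hu : (N:ℤ) = 2*u+1) (hm : m = (N:ℝ)/2) (τ z₁ z₂ t : ℂ) :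
    PhiAdd (-1) m (1/2) τ (z₁+1) (z₂-1) t = -PhiAdd (-1) m (1/2) τ z₁ z₂ t := by
  unfold PhiAdd
  rw [← mul_neg, ← tsum_neg]
  congr 1
  refine tsum_congr fun n => ?_
  by_cases h : 0 ≤ n ∧ (n:ℝ) < 2*m
  · rw [if_pos h, if_pos h,
      show (z₁ + 1 - (z₂ - 1))/2 = (z₁ - z₂)/2 + 1 by ring,
      show z₁ + 1 + (z₂ - 1) = z₁ + z₂ by ring,
      Rfun_S hu hm]
    ring
  · rw [if_neg h, if_neg h, neg_zero]

lemma PhiTilde_S (hu : (N:ℤ) = 2*u+1) (hm : m = (N:ℝ)/2) (τ z₁ z₂ t : ℂ) :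
    PhiTilde (-1) m (1/2) τ (z₁+1) (z₂-1) t = -PhiTilde (-1) m (1/2) τ z₁ z₂ t := by
  unfold PhiTilde Phi
  rw [Phi1_S, Phi2_S, PhiAdd_S hu hm]
  ring

lemma psi1_T (hu : (N:ℤ) = 2*u+1) (hm : m = (N:ℝ)/2) (τ z : ℂ) :
    psi1 m (τ+1) z = psi2 m τ z := by
  unfold psi1 psi2
  rw [show z/2 + (τ+1)/2 - 1/2 = z/2 + τ/2 by ring,
    show z/2 - (τ+1)/2 + 1/2 = z/2 - τ/2 by ring]
  exact PhiTilde_T hu hm τ _ _ 0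

lemma psi2_T (hu : (N:ℤ) = 2*u+1) (hm : m = (N:ℝ)/2) (τ z : ℂ) :
    psi2 m (τ+1) z = -psi1 m τ z := by
  unfold psi1 psi2
  rw [show z/2 + (τ+1)/2 = (z/2 + τ/2 - 1/2) + 1 by ring,
    show z/2 - (τ+1)/2 = (z/2 - τ/2 + 1/2) - 1 by ring]
  rw [PhiTilde_T hu hm]
  exact PhiTilde_S hu hm τ _ _ 0

lemma psi3_T (hu : (N:ℤ) = 2*u+1) (hm : m = (N:ℝ)/2) (τ z : ℂ) :
    psi3 m (τ+1) z = psi3 m τ z := by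
  unfold psi3
  exact PhiTilde_T hu hm τ _ _ 0

lemma eta_T (τ : ℂ) : eta (τ+1) = e (((1/24 : ℝ)) : ℂ) * eta τ := by
  unfold eta
  rw [qpow_T]
  rw [show (∏' n : ℕ, (1 - qpow (τ+1) ((n:ℝ)+1))) = ∏' n : ℕ, (1 - qpow τ ((n:ℝ)+1)) from
    tprod_congr fun n => by
      rw [show ((n:ℝ)+1) = (((n+1 : ℤ)):ℝ) by push_cast; ring, qpow_T_int]]
  ring

end Trans

theorem statement14 (N : ℕ) (hN : Odd N) (m : ℝ) (hm : m = (N : ℝ) / 2)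
    (p : ℤ) (hp : 0 ≤ p ∧ (p : ℝ) ≤ 2 * m)
    (τ : ℂ) (hτ : 0 < τ.im) (z : ℂ)
    (hz : ∀ a b : ℤ, z ≠ (a : ℂ) * τ + (b : ℂ)) :
    Xi1 m p (τ + 1) z
        = Complex.exp ((Real.pi : ℂ) * Complex.I * (2 * (p : ℂ) + 1) ^ 2 / (4 * (2 * (m : ℂ) + 1))
            - (Real.pi : ℂ) * Complex.I / 4) * Xi2 m p τ z ∧
    Xi2 m p (τ + 1) z
        = -Complex.exp ((Real.pi : ℂ) * Complex.I * (2 * (p : ℂ) + 1) ^ 2 / (4 * (2 * (m : ℂ) + 1))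
            - (Real.pi : ℂ) * Complex.I / 4) * Xi1 m p τ z ∧
    Xi3 m p (τ + 1) z
        = Complex.exp ((Real.pi : ℂ) * Complex.I * (p : ℂ) ^ 2 / (2 * (m : ℂ) + 1)) * Xi3 m p τ z ∧
    Ups1 m p (τ + 1) z
        = Complex.exp ((Real.pi : ℂ) * Complex.I * (2 * (p : ℂ) + 1) ^ 2 / (4 * (2 * (m : ℂ) + 1))
            - (Real.pi : ℂ) * Complex.I / 4) * Ups2 m p τ z ∧
    Ups2 m p (τ + 1) z
        = -Complex.exp ((Real.pi : ℂ) * Complex.I * (2 * (p : ℂ) + 1) ^ 2 / (4 * (2 * (m : ℂ) + 1))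
            - (Real.pi : ℂ) * Complex.I / 4) * Ups1 m p τ z ∧
    Ups3 m p (τ + 1) z
        = Complex.exp ((Real.pi : ℂ) * Complex.I * (p : ℂ) ^ 2 / (2 * (m : ℂ) + 1)) * Ups3 m p τ z := by
  obtain ⟨u0, hu0⟩ := hN
  have hu : (N:ℤ) = 2*((u0:ℤ))+1 := by exact_mod_cast hu0
  have hN0 : 0 < N := by omega
  have hNc : ((N:ℂ)) ≠ 0 := Nat.cast_ne_zero.mpr hN0.ne'
  have hmc : ((m:ℝ):ℂ) = (N:ℂ)/2 := by rw [hm]; push_cast; ring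
  have huc : ((N:ℂ)) = 2*(u0:ℂ)+1 := by exact_mod_cast hu
  have hu1 : ((u0:ℂ)) + 1 ≠ 0 := by
    have h0 : ((u0+1 : ℕ):ℂ) ≠ 0 := Nat.cast_ne_zero.mpr (Nat.succ_ne_zero u0)
    push_cast at h0; exact h0
  have hI4 : e (1/4 : ℂ) = Complex.I := by
    rw [e, show 2*(Real.pi:ℂ)*Complex.I*(1/4) = ((Real.pi/2 : ℝ):ℂ) * Complex.I by
      push_cast; ring, Complex.exp_mul_I]
    simp
  have hI4n : e (-(1/4) : ℂ) = -Complex.I := by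
    have h1 : Complex.I * e (-(1/4) : ℂ) = 1 := by
      rw [← hI4, ← e_add, show (1/4:ℂ) + -(1/4) = 0 by ring, e_zero]
    have h2 := congrArg (fun t => -Complex.I * t) h1
    simp only [← mul_assoc, mul_one] at h2
    rw [show -Complex.I * Complex.I = 1 by
      rw [neg_mul, Complex.I_mul_I, neg_neg], one_mul] at h2
    exact h2
  have h24 : e (((1/24:ℝ)):ℂ)^3 = e (((1/8:ℝ)):ℂ) := by
    rw [show ((((1/8:ℝ))):ℂ) = (((1/24:ℝ)):ℂ) + ((((1/24:ℝ)):ℂ) + (((1/24:ℝ)):ℂ)) by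
      push_cast; ring, e_add, e_add]
    ring
  have hN1c : ((N:ℂ)) + 1 ≠ 0 := by
    have h0 : ((N+1:ℕ):ℂ) ≠ 0 := Nat.cast_ne_zero.mpr (Nat.succ_ne_zero N)
    push_cast at h0; exact h0
  have h2m1 : (2*((m:ℝ):ℂ)+1) ≠ 0 := by
    rw [hmc, show (2*((N:ℂ)/2)+1) = (N:ℂ)+1 by ring]; exact hN1c
  have key1 : e (((-m/4 : ℝ)):ℂ) * e ((((2*(p:ℝ)+1)^2*m^2/(2*(2*m+1)) : ℝ)):ℂ)
      = Complex.exp ((Real.pi : ℂ) * Complex.I * (2 * (p : ℂ) + 1) ^ 2 / (4 * (2 * (m : ℂ) + 1))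
          - (Real.pi : ℂ) * Complex.I / 4) := by
    have hd : (((u0:ℤ)*p*(p+1) : ℤ):ℂ) = ((N:ℂ)-1)/2*(p:ℂ)*((p:ℂ)+1) := by
      push_cast; linear_combination (-((p:ℂ)*((p:ℂ)+1)/2)) * huc
    rw [← e_add,
      e_eq_of_sub_int ((((-m/4 : ℝ)):ℂ) + ((((2*(p:ℝ)+1)^2*m^2/(2*(2*m+1)) : ℝ)):ℂ))
        ((2*(p:ℂ)+1)^2/(8*(2*((m:ℝ):ℂ)+1)) - 1/8) ((u0:ℤ)*p*(p+1))
        (by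
          rw [hd]
          push_cast [hmc]
          rw [show (2*((N:ℂ)/2)+1) = (N:ℂ)+1 by ring]
          field_simp
          ring)]
    rw [e]; congr 1; field_simp [h2m1]; ring
  have key3 : e (((2*(p:ℝ)^2*m^2/(2*m+1) : ℝ)):ℂ)
      = Complex.exp ((Real.pi : ℂ) * Complex.I * (p : ℂ) ^ 2 / (2 * (m : ℂ) + 1)) := by
    have hd3 : (((u0:ℤ)*p^2 : ℤ):ℂ) = ((N:ℂ)-1)/2*(p:ℂ)^2 := by
      push_cast; linear_combination (-((p:ℂ)^2/2)) * huc
    rw [e_eq_of_sub_int (((2*(p:ℝ)^2*m^2/(2*m+1) : ℝ)):ℂ)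
        ((p:ℂ)^2/(2*(2*((m:ℝ):ℂ)+1))) ((u0:ℤ)*p^2)
        (by
          rw [hd3]
          push_cast [hmc]
          rw [show (2*((N:ℂ)/2)+1) = (N:ℂ)+1 by ring]
          field_simp
          ring)]
    rw [e]; congr 1; field_simp [h2m1]
  refine ⟨?_, ?_, ?_, ?_, ?_, ?_⟩
  · unfold Xi1 Xi2
    rw [qpow_T, psi1_T hu hm,
      theta_T (-1) (-1) ((2*(p:ℝ)+1)*m) (m+1/2) ((2*(p:ℝ)+1)^2*m^2/(2*(2*m+1))) τ 0
        (hinst1 hu hm),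
      show ((-1:ℂ)) * -1 = 1 by norm_num]
    linear_combination (qpow τ (-m/4) * theta 1 ((2*(p:ℝ)+1)*m) (m+1/2) τ 0 * psi2 m τ z) * key1
  · unfold Xi1 Xi2
    rw [qpow_T, psi2_T hu hm,
      theta_T 1 (-1) ((2*(p:ℝ)+1)*m) (m+1/2) ((2*(p:ℝ)+1)^2*m^2/(2*(2*m+1))) τ 0
        (hinst1 hu hm),
      show ((1:ℂ)) * -1 = -1 by norm_num]
    linear_combination
      (-(qpow τ (-m/4) * theta (-1) ((2*(p:ℝ)+1)*m) (m+1/2) τ 0 * psi1 m τ z)) * key1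
  · unfold Xi3
    rw [psi3_T hu hm,
      theta_T (-1) 1 (2*(p:ℝ)*m) (m+1/2) (2*(p:ℝ)^2*m^2/(2*m+1)) τ 0 (hinst3 hu hm),
      mul_one]
    linear_combination (theta (-1) (2*(p:ℝ)*m) (m+1/2) τ 0 * psi3 m τ z) * key3
  · unfold Ups1 Ups2
    rw [eta_T,
      theta_T (-1) (-1) ((p:ℝ)+1/2) (m+1/2) (((p:ℝ)+1/2)^2/(2*(2*m+1))) τ z (hinstU1 hu hm),
      theta_T (-1) (-1) (-((p:ℝ)+1/2)) (m+1/2) (((p:ℝ)+1/2)^2/(2*(2*m+1))) τ z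
        (hinstU1Neg hu hm),
      theta_T 1 (-1) 0 (1/2) 0 τ z hinstDen0,
      show ((-1:ℂ)) * -1 = 1 by norm_num, show ((1:ℂ)) * -1 = -1 by norm_num,
      Complex.ofReal_zero, e_zero, one_mul]
    rw [← mul_div_assoc]
    congr 1
    have keyU : -Complex.I * e (((1/24:ℝ)):ℂ)^3 * e ((((((p:ℝ)+1/2)^2/(2*(2*m+1)) : ℝ))):ℂ)
        = Complex.exp ((Real.pi : ℂ) * Complex.I * (2 * (p : ℂ) + 1) ^ 2 / (4 * (2 * (m : ℂ) + 1))
            - (Real.pi : ℂ) * Complex.I / 4) := by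
      rw [h24, ← hI4n, ← e_add, ← e_add,
        show ((-(1/4) : ℂ) + ((((1/8:ℝ))):ℂ) + (((((p:ℝ)+1/2)^2/(2*(2*m+1)) : ℝ)):ℂ))
          = (((p:ℝ):ℂ)+1/2)^2/(2*(2*((m:ℝ):ℂ)+1)) - 1/8 by push_cast; ring]
      rw [e]; congr 1; field_simp [h2m1]; push_cast; ring
    linear_combination (eta τ^3 *
      (theta 1 ((p:ℝ)+1/2) (m+1/2) τ z - theta 1 (-((p:ℝ)+1/2)) (m+1/2) τ z)) * keyU
  · unfold Ups1 Ups2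
    rw [eta_T,
      theta_T 1 (-1) ((p:ℝ)+1/2) (m+1/2) (((p:ℝ)+1/2)^2/(2*(2*m+1))) τ z (hinstU1 hu hm),
      theta_T 1 (-1) (-((p:ℝ)+1/2)) (m+1/2) (((p:ℝ)+1/2)^2/(2*(2*m+1))) τ z
        (hinstU1Neg hu hm),
      theta_T (-1) (-1) 0 (1/2) 0 τ z hinstDen0,
      show ((1:ℂ)) * -1 = -1 by norm_num, show ((-1:ℂ)) * -1 = 1 by norm_num,
      Complex.ofReal_zero, e_zero, one_mul]
    rw [← mul_div_assoc]
    congr 1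
    have keyU2 : e (((1/24:ℝ)):ℂ)^3 * e ((((((p:ℝ)+1/2)^2/(2*(2*m+1)) : ℝ))):ℂ)
        = -Complex.exp ((Real.pi : ℂ) * Complex.I * (2 * (p : ℂ) + 1) ^ 2 / (4 * (2 * (m : ℂ) + 1))
            - (Real.pi : ℂ) * Complex.I / 4) * -Complex.I := by
      rw [h24, ← e_add,
        show (((((1/8:ℝ))):ℂ) + (((((p:ℝ)+1/2)^2/(2*(2*m+1)) : ℝ)):ℂ))
          = ((((p:ℝ):ℂ)+1/2)^2/(2*(2*((m:ℝ):ℂ)+1)) - 1/8) + (1/4 : ℂ) by push_cast; ring,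
        e_add, hI4]
      rw [show (((((p:ℝ):ℂ)+1/2)^2/(2*(2*((m:ℝ):ℂ)+1)) - 1/8) : ℂ)
          = ((((p:ℝ):ℂ)+1/2)^2/(2*(2*((m:ℝ):ℂ)+1)) - 1/8) from rfl]
      have heY : e ((((p:ℝ):ℂ)+1/2)^2/(2*(2*((m:ℝ):ℂ)+1)) - 1/8)
          = Complex.exp ((Real.pi : ℂ) * Complex.I * (2 * (p : ℂ) + 1) ^ 2 / (4 * (2 * (m : ℂ) + 1))
              - (Real.pi : ℂ) * Complex.I / 4) := by
        rw [e]; congr 1; field_simp [h2m1]; push_cast; ring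
      rw [heY]; ring
    linear_combination (eta τ^3 *
      (theta (-1) ((p:ℝ)+1/2) (m+1/2) τ z - theta (-1) (-((p:ℝ)+1/2)) (m+1/2) τ z)) * keyU2
  · unfold Ups3
    rw [eta_T,
      theta_T (-1) 1 ((p:ℝ)) (m+1/2) ((p:ℝ)^2/(2*(2*m+1))) τ z (hinstU3 hu hm),
      theta_T (-1) 1 (-(p:ℝ)) (m+1/2) ((p:ℝ)^2/(2*(2*m+1))) τ z (hinstU3Neg hu hm),
      theta_T 1 1 (1/2) (1/2) (1/8) τ z hinstDenHalf]
    simp only [mul_one]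
    have hE8 : e (((1/8:ℝ)):ℂ) ≠ 0 := by rw [e]; exact Complex.exp_ne_zero _
    have hC : e ((((p:ℝ)^2/(2*(2*m+1)) : ℝ)):ℂ)
        = Complex.exp ((Real.pi : ℂ) * Complex.I * (p : ℂ) ^ 2 / (2 * (m : ℂ) + 1)) := by
      rw [e]; congr 1; push_cast; field_simp [h2m1]
    have key3U : -Complex.I * e (((1/24:ℝ)):ℂ)^3 * e ((((p:ℝ)^2/(2*(2*m+1)) : ℝ)):ℂ)
        = e (((1/8:ℝ)):ℂ) *
          (Complex.exp ((Real.pi : ℂ) * Complex.I * (p : ℂ) ^ 2 / (2 * (m : ℂ) + 1)) * -Complex.I) := by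
      rw [h24, hC]; ring
    have hnum : -Complex.I * (e (((1/24:ℝ)):ℂ) * eta τ)^3 *
          (e ((((p:ℝ)^2/(2*(2*m+1)) : ℝ)):ℂ) * theta (-1) ((p:ℝ)) (m+1/2) τ z
            - e ((((p:ℝ)^2/(2*(2*m+1)) : ℝ)):ℂ) * theta (-1) (-(p:ℝ)) (m+1/2) τ z)
        = e (((1/8:ℝ)):ℂ) *
          (Complex.exp ((Real.pi : ℂ) * Complex.I * (p : ℂ) ^ 2 / (2 * (m : ℂ) + 1)) *
            (-Complex.I * eta τ^3 *
              (theta (-1) ((p:ℝ)) (m+1/2) τ z - theta (-1) (-(p:ℝ)) (m+1/2) τ z))) := by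
      linear_combination (eta τ^3 *
        (theta (-1) ((p:ℝ)) (m+1/2) τ z - theta (-1) (-(p:ℝ)) (m+1/2) τ z)) * key3U
    rw [hnum, mul_div_mul_left _ _ hE8, mul_div_assoc]

end Mock
end
end

section
/- Let m, j, k ∈ (1/2)ℤ_odd ∩ (1/2)ℕ with 0 < j ≤ m and 0 < k ≤ m, where m ∈ (1/2)ℕ_odd. Then Σ_{ℓ ∈ (1/2)ℤ_odd, 0<ℓ<m} sin(πjℓ/m) sin(πkℓ/m) + (1/2) sin(πj) sin(πk) = (m/2) c_j δ_{j,k}, where c_j := 1 if j < m and c_j := 2 if j = m, and δ_{j,k} is the Kronecker delta. -/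
noncomputable section

open scoped BigOperators

namespace Mock

/-- full cosine geometric sum vanishes when `2N ∤ d`, `d` even -/
lemma Fvanish (N : ℕ) (hN : 0 < N) (d : ℤ) (hd : Even d) (hnd : ¬ ((2*(N:ℤ)) ∣ d)) :
    ∑ n ∈ Finset.range N, Real.cos (Real.pi * d * (2*(n:ℝ)+1) / (2*N)) = 0 := by
  have hNR : (N:ℝ) ≠ 0 := Nat.cast_ne_zero.mpr hN.ne'
  set a : ℝ := Real.pi * d / (2*N) with ha
  have hang : ∀ n : ℕ, Real.pi * d * (2*(n:ℝ)+1) / (2*N) = a + n * (2*a) := by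
    intro n; rw [ha]; field_simp; ring
  set x : ℂ := Complex.exp ((2*a : ℝ) * Complex.I) with hx
  have hxn : x ≠ 1 := by
    rw [hx]
    intro h
    obtain ⟨k, hk⟩ := Complex.exp_eq_one_iff.mp h
    have hI : (Complex.I : ℂ) ≠ 0 := Complex.I_ne_zero
    have h2 : ((2*a : ℝ) : ℂ) = (k : ℂ) * (2 * (Real.pi : ℂ)) := by
      field_simp at hk ⊢
      rw [mul_comm] at hk
      push_cast at hk ⊢
      linear_combination hk
    have h3 : (2*a : ℝ) = (k : ℝ) * (2 * Real.pi) := by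
      exact_mod_cast h2
    rw [ha] at h3
    have hπ := Real.pi_ne_zero
    have h4 : (d : ℝ) = ((2*(N:ℤ)*k : ℤ) : ℝ) := by
      push_cast
      field_simp at h3
      have h6 : Real.pi*(2*(d:ℝ)) = Real.pi*(4*(N:ℝ)*k) := by linear_combination 2 * Real.pi * h3
      have h7 := mul_left_cancel₀ hπ h6
      linarith
    exact hnd ⟨k, by exact_mod_cast h4⟩
  have hxN : x ^ N = 1 := by
    obtain ⟨e, he⟩ := hd
    rw [hx, ← Complex.exp_nat_mul]
    have : ((N:ℂ)) * (((2*a : ℝ):ℂ) * Complex.I) = (e : ℂ) * (2 * (Real.pi:ℂ) * Complex.I) := by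
      rw [ha]
      have : (d : ℂ) = 2 * e := by exact_mod_cast congrArg (Int.cast : ℤ → ℂ) (by omega : d = 2*e)
      have hNC : (N:ℂ) ≠ 0 := Nat.cast_ne_zero.mpr hN.ne'
      push_cast [this]
      field_simp
    rw [this, Complex.exp_int_mul_two_pi_mul_I]
  have hgeom : ∑ n ∈ Finset.range N, x ^ n = 0 := by
    rw [geom_sum_eq hxn, hxN]; simp
  have hsum : ∑ n ∈ Finset.range N, Complex.exp (((a + n*(2*a) : ℝ)) * Complex.I) = 0 := by
    have : ∀ n : ℕ, Complex.exp (((a + n*(2*a) : ℝ)) * Complex.I)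
        = Complex.exp ((a:ℝ) * Complex.I) * x ^ n := by
      intro n
      rw [hx, ← Complex.exp_nat_mul, ← Complex.exp_add]
      congr 1
      push_cast
      ring
    simp only [this, ← Finset.mul_sum, hgeom, mul_zero]
  calc ∑ n ∈ Finset.range N, Real.cos (Real.pi * d * (2*(n:ℝ)+1) / (2*N))
      = (∑ n ∈ Finset.range N, Complex.exp (((a + n*(2*a) : ℝ)) * Complex.I)).re := by
        rw [Complex.re_sum]
        exact Finset.sum_congr rfl fun n _ => by
          rw [Complex.exp_ofReal_mul_I_re, hang n]
    _ = 0 := by rw [hsum]; rfl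


lemma Fzero (N : ℕ) (hN : 0 < N) :
    ∑ n ∈ Finset.range N, Real.cos (Real.pi * (0:ℝ) * (2*(n:ℝ)+1) / (2*N)) = N := by
  simp

lemma F2N (N : ℕ) (hN : 0 < N) :
    ∑ n ∈ Finset.range N, Real.cos (Real.pi * (2*(N:ℝ)) * (2*(n:ℝ)+1) / (2*N)) = -N := by
  have hNR : (N:ℝ) ≠ 0 := Nat.cast_ne_zero.mpr hN.ne'
  have : ∀ n : ℕ, Real.cos (Real.pi * (2*(N:ℝ)) * (2*(n:ℝ)+1) / (2*N)) = -1 := by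
    intro n
    have harg : Real.pi * (2*(N:ℝ)) * (2*(n:ℝ)+1) / (2*N) = (n:ℝ) * (2*Real.pi) + Real.pi := by
      field_simp
    rw [harg, Real.cos_add]
    have h1 : Real.cos ((n:ℝ) * (2*Real.pi)) = 1 := by
      exact_mod_cast Real.cos_int_mul_two_pi (n : ℤ)
    rw [h1, Real.cos_pi, Real.sin_pi]
    ring
  rw [Finset.sum_congr rfl fun n _ => this n]
  simp

/-- reflection halving -/
lemma sum_reflect_half (M : ℕ) (f : ℕ → ℝ) (hf : ∀ n, n ≤ 2*M → f (2*M - n) = f n) :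
    ∑ n ∈ Finset.range (2*M+1), f n = 2 * ∑ n ∈ Finset.range M, f n + f M := by
  have h1 : ∑ n ∈ Finset.range (2*M+1), f n
      = ∑ n ∈ Finset.Ico 0 (M+1), f n + ∑ n ∈ Finset.Ico (M+1) (2*M+1), f n := by
    rw [Finset.sum_Ico_consecutive f (Nat.zero_le _) (by omega), ← Finset.range_eq_Ico]
  have h2 : ∑ n ∈ Finset.Ico (M+1) (2*M+1), f n = ∑ n ∈ Finset.range M, f (M+1+n) := by
    rw [Finset.sum_Ico_eq_sum_range]
    have : 2*M+1 - (M+1) = M := by omega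
    rw [this]
  have h3 : ∀ n ∈ Finset.range M, f (M+1+n) = f (M - 1 - n) := by
    intro n hn
    rw [Finset.mem_range] at hn
    rw [← hf (M+1+n) (by omega)]
    congr 1
    omega
  have h4 : ∑ n ∈ Finset.range M, f (M - 1 - n) = ∑ n ∈ Finset.range M, f n :=
    Finset.sum_range_reflect f M
  rw [h1, h2, Finset.sum_congr rfl h3, h4, ← Finset.range_eq_Ico, Finset.sum_range_succ]
  ring

/-- the symmetry of the cosine term -/
lemma cos_sym (N M : ℕ) (hNM : N = 2*M+1) (d : ℤ) (hd : Even d) (n : ℕ) (hn : n ≤ 2*M) :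
    Real.cos (Real.pi * d * (2*((2*M - n : ℕ):ℝ)+1) / (2*N))
      = Real.cos (Real.pi * d * (2*(n:ℝ)+1) / (2*N)) := by
  have hN : 0 < N := by omega
  have hNR : (N:ℝ) ≠ 0 := Nat.cast_ne_zero.mpr hN.ne'
  obtain ⟨e, he⟩ := hd
  have hde : (d:ℝ) = 2*e := by exact_mod_cast congrArg (Int.cast : ℤ → ℝ) (by omega : d = 2*e)
  have hcast : ((2*M - n : ℕ):ℝ) = 2*(M:ℝ) - n := by
    push_cast [Nat.cast_sub hn]; ring
  have harg : Real.pi * d * (2*((2*M - n : ℕ):ℝ)+1) / (2*N)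
      = (e:ℝ) * (2*Real.pi) - Real.pi * d * (2*(n:ℝ)+1) / (2*N) := by
    rw [hcast, hde]
    have : (N:ℝ) = 2*M+1 := by exact_mod_cast congrArg (Nat.cast : ℕ → ℝ) hNM
    rw [this]
    have h2 : (2:ℝ)*(2*(M:ℝ)+1) ≠ 0 := by positivity
    field_simp
    ring
  have hsin : Real.sin ((e:ℝ) * (2*Real.pi)) = 0 := by
    have : ((e:ℝ))*(2*Real.pi) = ((2*e : ℤ):ℝ)*Real.pi := by push_cast; ring
    rw [this, Real.sin_int_mul_pi]
  rw [harg, Real.cos_sub, Real.cos_int_mul_two_pi, hsin]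
  ring

lemma nodvd (a b : ℤ) (hb : b ≠ 0) (h : |b| < a) : ¬ a ∣ b := by
  intro h'
  have h2 : a ∣ |b| := (dvd_abs a b).mpr h'
  have := Int.le_of_dvd (abs_pos.mpr hb) h2
  omega


theorem statement17 (N J K : ℕ) (hN : Odd N) (hJ : Odd J) (hK : Odd K)
    (m j k : ℝ) (hm : m = (N : ℝ) / 2) (hj : j = (J : ℝ) / 2) (hk : k = (K : ℝ) / 2)
    (hjm : 0 < j ∧ j ≤ m) (hkm : 0 < k ∧ k ≤ m) :
    (∑ n ∈ Finset.range ((N - 1) / 2),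
        Real.sin (Real.pi * j * hodd n / m) * Real.sin (Real.pi * k * hodd n / m))
      + (1/2) * Real.sin (Real.pi * j) * Real.sin (Real.pi * k)
    = (m / 2) * (if j = m then 2 else 1) * (if j = k then 1 else 0) := by
  subst hm hj hk
  obtain ⟨M, hM⟩ := hN
  have hNpos : 0 < N := by omega
  have hNR : (N:ℝ) ≠ 0 := Nat.cast_ne_zero.mpr hNpos.ne'
  have hNM : N = 2*M+1 := by omega
  have hNMr : (N:ℝ) = 2*(M:ℝ)+1 := by exact_mod_cast congrArg (Nat.cast : ℕ → ℝ) hNM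
  have hJle : J ≤ N := by
    have h := hjm.2
    have : (J:ℝ) ≤ (N:ℝ) := by linarith
    exact_mod_cast this
  have hKle : K ≤ N := by
    have h := hkm.2
    have : (K:ℝ) ≤ (N:ℝ) := by linarith
    exact_mod_cast this
  have hJpos : 0 < J := hJ.pos
  have hKpos : 0 < K := hK.pos
  have hidx : (N-1)/2 = M := by omega
  rw [hidx]
  obtain ⟨a, hA⟩ := hJ
  obtain ⟨b, hB⟩ := hK
  have hd₁ : Even ((J:ℤ) - K) := ⟨(a:ℤ) - b, by push_cast [hA, hB]; ring⟩
  have hd₂ : Even ((J:ℤ) + K) := ⟨(a:ℤ) + b + 1, by push_cast [hA, hB]; ring⟩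
  -- the halving identity
  have key : ∀ d : ℤ, Even d →
      (∑ n ∈ Finset.range M, Real.cos (Real.pi * d * (2*(n:ℝ)+1) / (2*N)))
        + (1/2) * Real.cos (Real.pi * d * (2*(M:ℝ)+1) / (2*N))
      = (1/2) * ∑ n ∈ Finset.range N, Real.cos (Real.pi * d * (2*(n:ℝ)+1) / (2*N)) := by
    intro d hd
    have h := sum_reflect_half M (fun n => Real.cos (Real.pi * d * (2*(n:ℝ)+1) / (2*N)))
      (fun n hn => cos_sym N M hNM d hd n hn)
    rw [show Finset.range N = Finset.range (2*M+1) from by rw [hNM]]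
    rw [h]
    ring
  -- term-wise product to sum
  have hterm : ∀ n : ℕ,
      Real.sin (Real.pi * ((J:ℝ)/2) * hodd n / ((N:ℝ)/2)) *
        Real.sin (Real.pi * ((K:ℝ)/2) * hodd n / ((N:ℝ)/2))
      = (Real.cos (Real.pi * (((J:ℤ) - K : ℤ):ℝ) * (2*(n:ℝ)+1) / (2*N))
          - Real.cos (Real.pi * (((J:ℤ) + K : ℤ):ℝ) * (2*(n:ℝ)+1) / (2*N))) / 2 := by
    intro n
    have hA' : Real.pi * ((J:ℝ)/2) * hodd n / ((N:ℝ)/2)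
        = Real.pi * (J:ℝ) * (2*(n:ℝ)+1) / (2*N) := by
      unfold hodd; field_simp
    have hB' : Real.pi * ((K:ℝ)/2) * hodd n / ((N:ℝ)/2)
        = Real.pi * (K:ℝ) * (2*(n:ℝ)+1) / (2*N) := by
      unfold hodd; field_simp
    rw [hA', hB']
    set A := Real.pi * (J:ℝ) * (2*(n:ℝ)+1) / (2*N) with hA2
    set B := Real.pi * (K:ℝ) * (2*(n:ℝ)+1) / (2*N) with hB2
    have h1 : Real.pi * (((J:ℤ) - K : ℤ):ℝ) * (2*(n:ℝ)+1) / (2*N) = A - B := by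
      rw [hA2, hB2]; push_cast; ring
    have h2 : Real.pi * (((J:ℤ) + K : ℤ):ℝ) * (2*(n:ℝ)+1) / (2*N) = A + B := by
      rw [hA2, hB2]; push_cast; ring
    rw [h1, h2, Real.cos_sub, Real.cos_add]
    ring
  -- half-term product to sum
  have hhalf :
      Real.sin (Real.pi * ((J:ℝ)/2)) * Real.sin (Real.pi * ((K:ℝ)/2))
      = (Real.cos (Real.pi * (((J:ℤ) - K : ℤ):ℝ) * (2*(M:ℝ)+1) / (2*N))
          - Real.cos (Real.pi * (((J:ℤ) + K : ℤ):ℝ) * (2*(M:ℝ)+1) / (2*N))) / 2 := by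
    have h1 : Real.pi * (((J:ℤ) - K : ℤ):ℝ) * (2*(M:ℝ)+1) / (2*N)
        = Real.pi * ((J:ℝ)/2) - Real.pi * ((K:ℝ)/2) := by
      rw [hNMr] at hNR ⊢; push_cast; field_simp
    have h2 : Real.pi * (((J:ℤ) + K : ℤ):ℝ) * (2*(M:ℝ)+1) / (2*N)
        = Real.pi * ((J:ℝ)/2) + Real.pi * ((K:ℝ)/2) := by
      rw [hNMr] at hNR ⊢; push_cast; field_simp
    rw [h1, h2, Real.cos_sub, Real.cos_add]
    ring
  rw [Finset.sum_congr rfl (fun n _ => hterm n), mul_assoc, hhalf]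
  have hs : ∑ n ∈ Finset.range M,
      ((Real.cos (Real.pi * (((J:ℤ) - K : ℤ):ℝ) * (2*(n:ℝ)+1) / (2*N))
        - Real.cos (Real.pi * (((J:ℤ) + K : ℤ):ℝ) * (2*(n:ℝ)+1) / (2*N))) / 2)
      = (∑ n ∈ Finset.range M, Real.cos (Real.pi * (((J:ℤ) - K : ℤ):ℝ) * (2*(n:ℝ)+1) / (2*N))) / 2
        - (∑ n ∈ Finset.range M, Real.cos (Real.pi * (((J:ℤ) + K : ℤ):ℝ) * (2*(n:ℝ)+1) / (2*N))) / 2 := by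
    rw [← Finset.sum_div, Finset.sum_sub_distrib, sub_div]
  rw [hs]
  have e1 := key _ hd₁
  have e2 := key _ hd₂
  by_cases hJK : J = K
  · have hif2 : ((J:ℝ)/2 = (K:ℝ)/2) := by rw [hJK]
    rw [if_pos hif2]
    have hc0 : (((J:ℤ) - K : ℤ):ℝ) = (0:ℝ) := by
      rw [hJK]; push_cast; ring
    have hF1 : ∑ n ∈ Finset.range N,
        Real.cos (Real.pi * (((J:ℤ) - K : ℤ):ℝ) * (2*(n:ℝ)+1) / (2*N)) = N := by
      simp only [hc0]
      exact Fzero N hNpos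
    by_cases hJN : J = N
    · have hif1 : ((J:ℝ)/2 = (N:ℝ)/2) := by rw [hJN]
      rw [if_pos hif1]
      have hc2 : (((J:ℤ) + K : ℤ):ℝ) = 2*(N:ℝ) := by
        push_cast
        rw [show (J:ℝ) = (N:ℝ) from by exact_mod_cast congrArg (Nat.cast : ℕ → ℝ) hJN,
            show (K:ℝ) = (N:ℝ) from by exact_mod_cast congrArg (Nat.cast : ℕ → ℝ) (hJK ▸ hJN)]
        ring
      have hF2 : ∑ n ∈ Finset.range N,
          Real.cos (Real.pi * (((J:ℤ) + K : ℤ):ℝ) * (2*(n:ℝ)+1) / (2*N)) = -N := by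
        simp only [hc2]
        exact F2N N hNpos
      rw [hF1] at e1; rw [hF2] at e2
      linarith
    · have hif1 : ¬((J:ℝ)/2 = (N:ℝ)/2) := by
        intro h
        exact hJN (by exact_mod_cast (by linarith : (J:ℝ) = (N:ℝ)))
      rw [if_neg hif1]
      have hJltN : J < N := lt_of_le_of_ne hJle hJN
      have hF2 : ∑ n ∈ Finset.range N,
          Real.cos (Real.pi * (((J:ℤ) + K : ℤ):ℝ) * (2*(n:ℝ)+1) / (2*N)) = 0 := by
        apply Fvanish N hNpos _ hd₂
        apply nodvd
        · omega
        · rw [abs_of_pos (by omega : (0:ℤ) < (J:ℤ) + K)]; omega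
      rw [hF1] at e1; rw [hF2] at e2
      linarith
  · have hif2 : ¬((J:ℝ)/2 = (K:ℝ)/2) := by
      intro h
      exact hJK (by exact_mod_cast (by linarith : (J:ℝ) = (K:ℝ)))
    rw [if_neg hif2, mul_zero]
    have hF1 : ∑ n ∈ Finset.range N,
        Real.cos (Real.pi * (((J:ℤ) - K : ℤ):ℝ) * (2*(n:ℝ)+1) / (2*N)) = 0 := by
      apply Fvanish N hNpos _ hd₁
      apply nodvd
      · omega
      · rcases abs_cases ((J:ℤ) - K) with ⟨h1, _⟩ | ⟨h1, _⟩ <;> omega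
    have hJKN : J + K < 2*N := by omega
    have hF2 : ∑ n ∈ Finset.range N,
        Real.cos (Real.pi * (((J:ℤ) + K : ℤ):ℝ) * (2*(n:ℝ)+1) / (2*N)) = 0 := by
      apply Fvanish N hNpos _ hd₂
      apply nodvd
      · omega
      · rw [abs_of_pos (by omega : (0:ℤ) < (J:ℤ) + K)]; omega
    rw [hF1] at e1; rw [hF2] at e2
    linarith


end Mock
end
end
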